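/- The function f(x) = -30·cosh(3x) - 18·cosh(5x) + 10·sinh(7x) + 15(1-K)·cosh(8x), where K = ∫₀¹ (1/x²)(1/√(1-x⁴) - 1) dx, is increasing on [0, ∞). -/

import Mathlib

open Real
open intervalIntegral

noncomputable def K : ℝ := ∫ x in (0:ℝ)..1, (1 / x ^ 2) * (1 / Real.sqrt (1 - x ^ 4) - 1)

noncomputable def f (x : ℝ) : ℝ :=
  -30 * Real.cosh (3 * x) - 18 * Real.cosh (5 * x) + 10 * Real.sinh (7 * x)
    + 15 * (1 - K) * Real.cosh (8 * x)

noncomputable def gbound (x : ℝ) : ℝ := (1 - x) ^ (-(1/2) : ℝ) - Real.sqrt (1 - x) - x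

lemma rpow_intable : IntervalIntegrable (fun x : ℝ => (1-x) ^ (-(1/2) : ℝ))
    MeasureTheory.volume 0 1 := by
  have h1 : IntervalIntegrable (fun x : ℝ => x ^ (-(1/2) : ℝ)) MeasureTheory.volume 0 1 :=
    intervalIntegral.intervalIntegrable_rpow' (by norm_num)
  have h1' := (h1.comp_sub_left 1).symm
  simpa using h1'

lemma gbound_intable : IntervalIntegrable gbound MeasureTheory.volume 0 1 := by
  have h2 : IntervalIntegrable (fun x : ℝ => Real.sqrt (1 - x) + x) MeasureTheory.volume 0 1 :=
    (Continuous.intervalIntegrable (by continuity) 0 1)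
  have h := rpow_intable.sub h2
  unfold gbound
  simpa [sub_add_eq_sub_sub] using h

lemma sqrt_integral : ∫ x in (0:ℝ)..1, Real.sqrt (1-x) = 2/3 := by
  have hs : ∀ x ∈ Set.uIcc (0:ℝ) 1, Real.sqrt (1-x) = (1-x) ^ ((1/2) : ℝ) := by
    intro x hx
    exact Real.sqrt_eq_rpow _
  rw [intervalIntegral.integral_congr hs]
  rw [intervalIntegral.integral_comp_sub_left (fun x : ℝ => x ^ ((1/2) : ℝ)) 1]
  norm_num
  rw [integral_rpow (Or.inl (by norm_num))]
  rw [Real.zero_rpow (by norm_num), Real.one_rpow]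
  norm_num

lemma gbound_integral : ∫ x in (0:ℝ)..1, gbound x = 5/6 := by
  have h2 : IntervalIntegrable (fun x : ℝ => Real.sqrt (1 - x) + x) MeasureTheory.volume 0 1 :=
    (Continuous.intervalIntegrable (by continuity) 0 1)
  have hsplit : ∫ x in (0:ℝ)..1, gbound x
      = (∫ x in (0:ℝ)..1, (1-x) ^ (-(1/2) : ℝ)) - ∫ x in (0:ℝ)..1, (Real.sqrt (1-x) + x) := by
    rw [← intervalIntegral.integral_sub rpow_intable h2]
    apply intervalIntegral.integral_congr
    intro x _
    simp [gbound]
    ring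
  have hA : (∫ x in (0:ℝ)..1, (1-x) ^ (-(1/2) : ℝ)) = 2 := by
    rw [intervalIntegral.integral_comp_sub_left (fun x : ℝ => x ^ (-(1/2) : ℝ)) 1]
    norm_num
    rw [integral_rpow (Or.inl (by norm_num))]
    rw [Real.zero_rpow (by norm_num), Real.one_rpow]
    norm_num
  have hB : (∫ x in (0:ℝ)..1, (Real.sqrt (1-x) + x)) = 2/3 + 1/2 := by
    rw [intervalIntegral.integral_add ((Continuous.intervalIntegrable (by continuity) 0 1))
      ((Continuous.intervalIntegrable (by continuity) 0 1)), integral_id,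
      sqrt_integral]
    norm_num
  rw [hsplit, hA, hB]; norm_num

lemma ptwise : ∀ x ∈ Set.Icc (0:ℝ) 1,
    (1 / x ^ 2) * (1 / Real.sqrt (1 - x ^ 4) - 1) ≤ gbound x := by
  rintro x ⟨hx0, hx1⟩
  rcases eq_or_lt_of_le hx0 with h0 | h0
  · rw [← h0]
    norm_num [gbound]
  rcases eq_or_lt_of_le hx1 with h1 | h1
  · rw [h1]
    norm_num [gbound, Real.zero_rpow]
  · have hx4 : (0:ℝ) < 1 - x^4 := by nlinarith [pow_lt_one₀ hx0 h1 (n := 4) (by norm_num)]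
    have hx1' : (0:ℝ) < 1 - x := by linarith
    set a := Real.sqrt (1 - x^4) with hadef
    set s := Real.sqrt (1 - x) with hsdef
    have ha : 0 < a := Real.sqrt_pos.mpr hx4
    have ha2 : a^2 = 1 - x^4 := Real.sq_sqrt hx4.le
    have hs : 0 < s := Real.sqrt_pos.mpr hx1'
    have hs2 : s^2 = 1 - x := Real.sq_sqrt hx1'.le
    have hsa : s ≤ a := Real.sqrt_le_sqrt (by nlinarith [pow_le_one₀ hx0 hx1 (n := 3)])
    have hL : 1 / x ^ 2 * (1 / a - 1) = x ^ 2 / (a * (1 + a)) := by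
      field_simp
      linear_combination (-1) * ha2
    have hR : gbound x = x^2 / (s * (1 + s)) := by
      have hrs : (1 - x) ^ (-(1/2) : ℝ) = s⁻¹ := by
        rw [Real.rpow_neg hx1'.le, hsdef, Real.sqrt_eq_rpow]
      rw [gbound, hrs]
      field_simp
      linear_combination (-(x + 1 + s)) * hs2
    rw [hL, hR]
    gcongr

lemma K_le : K ≤ 5/6 := by
  by_cases h : IntervalIntegrable (fun x : ℝ => (1 / x ^ 2) * (1 / Real.sqrt (1 - x ^ 4) - 1))
      MeasureTheory.volume 0 1
  · have := intervalIntegral.integral_mono_on (by norm_num : (0:ℝ) ≤ 1) h gbound_intable ptwise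
    rw [gbound_integral] at this
    exact this
  · rw [K, intervalIntegral.integral_undef h]
    norm_num

lemma key_poly (c u : ℝ) (hc : 20 ≤ c) (hu : 1 ≤ u) :
    0 ≤ c * (u^16 - 1) + 70 * (u^15 + u) + 90 * (u^5 + u^3) - 90 * (u^13 + u^11) := by
  have h1 : 0 ≤ u ^ 16 - 1 := by nlinarith [pow_le_pow_left₀ (by norm_num : (0:ℝ) ≤ 1) hu 16]
  have h2 : 20 * (u^16 - 1) ≤ c * (u^16 - 1) := by nlinarith
  have h3 : 0 ≤ 20 * (u^16 - 1) + 70 * (u^15 + u) + 90 * (u^5 + u^3) - 90 * (u^13 + u^11) := by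
    obtain ⟨t, ht, rfl⟩ : ∃ t, 0 ≤ t ∧ u = 1 + t := ⟨u - 1, by linarith, by ring⟩
    nlinarith [sq_nonneg (73*t^2 - 1), pow_nonneg ht 3, pow_nonneg ht 4, pow_nonneg ht 5,
      pow_nonneg ht 6, pow_nonneg ht 7, pow_nonneg ht 8, pow_nonneg ht 9, pow_nonneg ht 10,
      pow_nonneg ht 11, pow_nonneg ht 12, pow_nonneg ht 13, pow_nonneg ht 14, pow_nonneg ht 15,
      pow_nonneg ht 16, sq_nonneg t]
  linarith

lemma core (c x : ℝ) (hc : 20 ≤ c) (hx : 0 ≤ x) :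
    0 ≤ -90 * Real.sinh (3*x) - 90 * Real.sinh (5*x) + 70 * Real.cosh (7*x)
        + c * Real.sinh (8*x) := by
  have hu : 1 ≤ Real.exp x := Real.one_le_exp hx
  have hu0 : (0:ℝ) < Real.exp x := Real.exp_pos x
  have e : ∀ n : ℕ, Real.exp ((n:ℝ) * x) = Real.exp x ^ n := fun n => Real.exp_nat_mul x n
  have e3 : Real.exp (3*x) = Real.exp x ^ 3 := by have := e 3; norm_num at this; exact this
  have e5 : Real.exp (5*x) = Real.exp x ^ 5 := by have := e 5; norm_num at this; exact this
  have e7 : Real.exp (7*x) = Real.exp x ^ 7 := by have := e 7; norm_num at this; exact this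
  have e8 : Real.exp (8*x) = Real.exp x ^ 8 := by have := e 8; norm_num at this; exact this
  rw [Real.sinh_eq, Real.sinh_eq, Real.sinh_eq, Real.cosh_eq, Real.exp_neg, Real.exp_neg,
    Real.exp_neg, Real.exp_neg, e3, e5, e7, e8]
  set u := Real.exp x with hudef
  have hB := key_poly c u hc hu
  have hne : u ≠ 0 := ne_of_gt hu0
  have hrepr : -90 * ((u^3 - (u^3)⁻¹)/2) - 90 * ((u^5 - (u^5)⁻¹)/2) + 70 * ((u^7 + (u^7)⁻¹)/2)
      + c * ((u^8 - (u^8)⁻¹)/2)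
      = (c * (u^16 - 1) + 70 * (u^15 + u) + 90 * (u^5 + u^3) - 90 * (u^13 + u^11)) / (2 * u^8) := by
    field_simp
    ring
  rw [hrepr]
  exact div_nonneg hB (by positivity)

lemma f_hasDeriv (x : ℝ) : HasDerivAt f
    (-90 * Real.sinh (3*x) - 90 * Real.sinh (5*x) + 70 * Real.cosh (7*x)
      + (15 * (1 - K) * 8) * Real.sinh (8*x)) x := by
  have h3 : HasDerivAt (fun y : ℝ => Real.cosh (3*y)) (Real.sinh (3*x) * (3*1)) x :=
    ((hasDerivAt_id x).const_mul (3:ℝ)).cosh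
  have h5 : HasDerivAt (fun y : ℝ => Real.cosh (5*y)) (Real.sinh (5*x) * (5*1)) x :=
    ((hasDerivAt_id x).const_mul (5:ℝ)).cosh
  have h7 : HasDerivAt (fun y : ℝ => Real.sinh (7*y)) (Real.cosh (7*x) * (7*1)) x :=
    ((hasDerivAt_id x).const_mul (7:ℝ)).sinh
  have h8 : HasDerivAt (fun y : ℝ => Real.cosh (8*y)) (Real.sinh (8*x) * (8*1)) x :=
    ((hasDerivAt_id x).const_mul (8:ℝ)).cosh
  have H0 := (((h3.const_mul (-30:ℝ)).sub (h5.const_mul (18:ℝ))).add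
      (h7.const_mul (10:ℝ))).add (h8.const_mul (15*(1-K)))
  have H1 : HasDerivAt f (-30 * (Real.sinh (3*x) * (3*1)) - 18 * (Real.sinh (5*x) * (5*1))
      + 10 * (Real.cosh (7*x) * (7*1)) + 15*(1-K) * (Real.sinh (8*x) * (8*1))) x := by
    have : f = fun y : ℝ => -30 * Real.cosh (3*y) - 18 * Real.cosh (5*y)
        + 10 * Real.sinh (7*y) + 15*(1-K) * Real.cosh (8*y) := rfl
    rw [this]
    exact H0
  exact H1.congr_deriv (by ring)

theorem stmt_0 : MonotoneOn f (Set.Ici (0 : ℝ)) := by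
  have hc : 20 ≤ 15 * (1 - K) * 8 := by
    have := K_le
    nlinarith
  have hdiff : Differentiable ℝ f := fun x => (f_hasDeriv x).differentiableAt
  apply monotoneOn_of_deriv_nonneg (convex_Ici 0) hdiff.continuous.continuousOn
    hdiff.differentiableOn
  intro x hx
  rw [interior_Ici] at hx
  rw [(f_hasDeriv x).deriv]
  exact core (15 * (1 - K) * 8) x hc (le_of_lt hx)
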